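/- arXiv:2109.04068 — 2 statements merged into one kernel-verified Lean document; each statement's English description precedes it below -/
import Mathlib

section
/- Suppose δ_ℓ(n) = 0 for ℓ < N_1 and ℓ > N_2, and δ_ℓ(m) = 0 for ℓ < M_1 and ℓ > M_2. Then δ_ℓ(|n ± m|) = 0 for all ℓ < min{N_1, M_1} − 3 and for all ℓ > max{N_2, M_2} + 2. -/
/-- A valid Zeckendorf representation of `n`: digits in `{0,1}`, digits below index 2 vanish,
no two consecutive ones, finite support, and the weighted sum equals `n`. -/
def IsZeckRep (n : ℕ) (δ : ℕ → ℕ) : Prop :=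
  (∀ k, δ k ≤ 1) ∧ (∀ k < 2, δ k = 0) ∧ (∀ k, δ (k + 1) = 1 → δ k = 0) ∧
    ∃ L, (∀ k, L < k → δ k = 0) ∧ n = ∑ k ∈ Finset.range (L + 1), δ k * Nat.fib k

-- The canonical Zeckendorf digit function.
open Classical in
noncomputable def zeckDigit (n k : ℕ) : ℕ :=
  if h : ∃ δ : ℕ → ℕ, IsZeckRep n δ then h.choose k else 0

noncomputable def phi : ℝ := (1 + Real.sqrt 5) / 2

open Finset

/-! ### Basic facts about `phi` -/

lemma sqrt5_sq : Real.sqrt 5 ^ 2 = 5 := Real.sq_sqrt (by norm_num)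

lemma sqrt5_gt_two : 2 < Real.sqrt 5 := by
  nlinarith [Real.sqrt_nonneg 5, sqrt5_sq]

lemma one_lt_phi : 1 < phi := by unfold phi; nlinarith [sqrt5_gt_two]

lemma phi_pos : 0 < phi := lt_trans one_pos one_lt_phi

lemma phi_sq : phi ^ 2 = phi + 1 := by unfold phi; nlinarith [sqrt5_sq]

noncomputable def pr : ℝ := phi⁻¹

lemma pr_pos : 0 < pr := inv_pos.2 phi_pos

lemma phi_mul_pr : phi * pr = 1 := mul_inv_cancel₀ phi_pos.ne'

lemma pr_lt_one : pr < 1 := by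
  rw [pr, inv_lt_one_iff₀]; right; exact one_lt_phi

lemma pr_sq : pr ^ 2 = 1 - pr := by
  have h := phi_sq
  have h2 : phi * pr = 1 := phi_mul_pr
  nlinarith [pr_pos]

lemma half_lt_pr : 1 / 2 < pr := by
  have h2 : phi * pr = 1 := phi_mul_pr
  have : phi < 2 := by unfold phi; nlinarith [sqrt5_sq, sqrt5_gt_two]
  nlinarith [pr_pos]

/-- Key identity : `phi * F k = F (k+1) + (-1)^(k+1) * pr^k`. -/
lemma phi_fib (k : ℕ) : phi * (Nat.fib k : ℝ) = (Nat.fib (k+1) : ℝ) + (-1)^(k+1) * pr^k := by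
  induction k using Nat.twoStepInduction with
  | zero => simp
  | one =>
      have h2 : phi * pr = 1 := phi_mul_pr
      simp [Nat.fib_one]
      nlinarith [phi_sq]
  | more k ih1 ih2 =>
      have hfib : (Nat.fib (k+2) : ℝ) = Nat.fib k + Nat.fib (k+1) := by
        rw [Nat.fib_add_two]; push_cast; ring
      have hfib3 : (Nat.fib (k+3) : ℝ) = Nat.fib (k+1) + Nat.fib (k+2) := by
        rw [show k+3 = (k+1)+2 by ring, Nat.fib_add_two]; push_cast; ring
      have hsq : pr ^ 2 = 1 - pr := pr_sq
      rw [show k+2+1 = k+3 by ring]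
      linear_combination phi * hfib - hfib3 + ih1 + ih2 + ((-1:ℝ)^k * pr^k) * hsq

/-! ### Geometric tail bounds for valid digit sequences -/

/-- Core bound: sum of `δ k * pr^k` over `[t, t+d)` is at most `phi * pr^t`,
for 0/1 digits with no two consecutive ones. -/
lemma sumB (δ : ℕ → ℕ) (h1 : ∀ k, δ k ≤ 1) (h2 : ∀ k, δ (k+1) = 1 → δ k = 0) :
    ∀ d t, ∑ k ∈ range d, (δ (t+k) : ℝ) * pr ^ (t+k) ≤ phi * pr ^ t := by
  intro d
  induction d using Nat.strong_induction_on with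
  | _ d ih =>
  intro t
  match d with
  | 0 =>
      simp only [range_zero, Finset.sum_empty]
      exact mul_nonneg phi_pos.le (pow_nonneg pr_pos.le t)
  | (j+1) =>
      rw [Finset.sum_range_succ']
      have hA : ∑ i ∈ range j, (δ (t+(i+1)) : ℝ) * pr ^ (t+(i+1)) =
          ∑ i ∈ range j, (δ ((t+1)+i) : ℝ) * pr ^ ((t+1)+i) :=
        Finset.sum_congr rfl (fun i _ => by rw [show t+(i+1) = (t+1)+i from by omega])
      by_cases hδ : δ t = 1
      · match j with
        | 0 =>
            simp only [range_zero, Finset.sum_empty, Nat.add_zero, zero_add, hδ,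
              Nat.cast_one, one_mul]
            have : (1:ℝ) * pr ^ t ≤ phi * pr ^ t :=
              mul_le_mul_of_nonneg_right one_lt_phi.le (pow_nonneg pr_pos.le t)
            linarith
        | (j'+1) =>
            rw [hA, Finset.sum_range_succ']
            have hδ1 : δ (t+1) = 0 := by
              by_contra hc
              have h1' := h1 (t+1)
              have : δ (t+1) = 1 := by omega
              have := h2 t this
              omega
            have hB : ∑ i ∈ range j', (δ ((t+1)+(i+1)) : ℝ) * pr ^ ((t+1)+(i+1)) =
                ∑ i ∈ range j', (δ ((t+2)+i) : ℝ) * pr ^ ((t+2)+i) :=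
              Finset.sum_congr rfl (fun i _ => by rw [show (t+1)+(i+1) = (t+2)+i from by omega])
            rw [hB]
            have ih2 := ih j' (by omega) (t+2)
            have key : phi * pr ^ (t+2) + pr ^ t = phi * pr ^ t := by
              linear_combination (phi * pr ^ t) * pr_sq - pr ^ t * phi_mul_pr
            have hδ0 : ((δ (t+1+0) : ℝ)) * pr ^ (t+1+0) = 0 := by
              norm_num [hδ1]
            rw [hδ0]
            simp only [Nat.add_zero, hδ, Nat.cast_one, one_mul]
            linarith
      · have hδ0 : δ t = 0 := by have := h1 t; omega
        rw [hA]
        have ih1 := ih j (by omega) (t+1)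
        have hmono : pr ^ (t+1) ≤ pr ^ t :=
          pow_le_pow_of_le_one pr_pos.le pr_lt_one.le (by omega)
        have : phi * pr ^ (t+1) ≤ phi * pr ^ t :=
          mul_le_mul_of_nonneg_left hmono phi_pos.le
        simp only [Nat.add_zero, hδ0, Nat.cast_zero, zero_mul, add_zero]
        linarith

/-- Tail bound over an initial segment, when digits vanish below `t`. -/
lemma tail_bound (δ : ℕ → ℕ) (h1 : ∀ k, δ k ≤ 1) (h2 : ∀ k, δ (k+1) = 1 → δ k = 0)
    (L t : ℕ) (ht : ∀ k < t, δ k = 0) :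
    ∑ k ∈ range L, (δ k : ℝ) * pr ^ k ≤ phi * pr ^ t := by
  have hsub : ∑ k ∈ Finset.Ico t L, (δ k : ℝ) * pr ^ k
      = ∑ k ∈ range L, (δ k : ℝ) * pr ^ k := by
    apply Finset.sum_subset
    · intro k hk
      simp only [Finset.mem_Ico] at hk
      exact Finset.mem_range.2 hk.2
    · intro k hk hnk
      simp only [Finset.mem_range] at hk
      simp only [Finset.mem_Ico, not_and, not_lt] at hnk
      rcases lt_or_ge k t with hkt | hkt
      · rw [ht k hkt]; simp
      · omega
  rw [← hsub, Finset.sum_Ico_eq_sum_range]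
  exact sumB δ h1 h2 (L - t) t

/-! ### The error sum identity -/

lemma rep_master (x : ℕ) (δ : ℕ → ℕ) (h : IsZeckRep x δ) :
    ∃ I : ℤ, ∃ L : ℕ, (∀ k, L < k → δ k = 0) ∧
      (x : ℝ) * phi - I = ∑ k ∈ range (L+1), (δ k : ℝ) * ((-1)^(k+1) * pr^k) := by
  obtain ⟨h1, h0, h2, L, hL, hsum⟩ := h
  refine ⟨((∑ k ∈ range (L+1), δ k * Nat.fib (k+1) : ℕ) : ℤ), L, hL, ?_⟩
  have hx : (x : ℝ) = ∑ k ∈ range (L+1), (δ k : ℝ) * (Nat.fib k : ℝ) := by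
    exact_mod_cast congrArg (Nat.cast : ℕ → ℝ) hsum
  have hI : (((∑ k ∈ range (L+1), δ k * Nat.fib (k+1) : ℕ) : ℤ) : ℝ)
      = ∑ k ∈ range (L+1), (δ k : ℝ) * (Nat.fib (k+1) : ℝ) := by
    push_cast
    rfl
  rw [hx, hI, Finset.sum_mul, ← Finset.sum_sub_distrib]
  apply Finset.sum_congr rfl
  intro k _
  linear_combination ((δ k : ℝ)) * phi_fib k

lemma abs_err_bound (δ : ℕ → ℕ) (h1 : ∀ k, δ k ≤ 1) (h2 : ∀ k, δ (k+1) = 1 → δ k = 0)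
    (L t : ℕ) (ht : ∀ k < t, δ k = 0) :
    |∑ k ∈ range L, (δ k : ℝ) * ((-1)^(k+1) * pr^k)| ≤ phi * pr ^ t := by
  calc |∑ k ∈ range L, (δ k : ℝ) * ((-1)^(k+1) * pr^k)|
      ≤ ∑ k ∈ range L, |(δ k : ℝ) * ((-1)^(k+1) * pr^k)| :=
        Finset.abs_sum_le_sum_abs _ _
    _ = ∑ k ∈ range L, (δ k : ℝ) * pr ^ k := by
        apply Finset.sum_congr rfl
        intro k _
        rw [abs_mul, abs_mul, abs_pow, abs_neg, abs_one, one_pow, one_mul,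
          abs_of_nonneg (by positivity : (0:ℝ) ≤ (δ k : ℝ)),
          abs_of_nonneg (pow_nonneg pr_pos.le k)]
    _ ≤ phi * pr ^ t := tail_bound δ h1 h2 L t ht

lemma rep_upper (x : ℕ) (δ : ℕ → ℕ) (h : IsZeckRep x δ) (t : ℕ) (ht : ∀ k < t, δ k = 0) :
    ∃ I : ℤ, |(x : ℝ) * phi - I| ≤ phi * pr ^ t := by
  obtain ⟨I, L, hL, hE⟩ := rep_master x δ h
  refine ⟨I, ?_⟩
  rw [hE]
  exact abs_err_bound δ h.1 h.2.2.1 (L+1) t ht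

lemma phi_eq : phi = 1 + pr := by
  have h2 := phi_mul_pr
  have : phi * (phi - 1 - pr) = 0 := by linear_combination phi_sq - phi_mul_pr
  rcases mul_eq_zero.mp this with h | h
  · exact absurd h phi_pos.ne'
  · linarith

lemma pr_lt_two_thirds : pr < 2/3 := by
  have h32 : 3/2 < phi := by unfold phi; nlinarith [sqrt5_gt_two]
  nlinarith [phi_mul_pr, pr_pos]

lemma rep_lower (x : ℕ) (δ : ℕ → ℕ) (h : IsZeckRep x δ) (t : ℕ) (ht1 : δ t = 1)
    (ht : ∀ k < t, δ k = 0) : ∀ M : ℤ, pr ^ (t+1) ≤ |(x : ℝ) * phi - M| := by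
  obtain ⟨h1, h0, h2, L0, hL0, hsum⟩ := h
  have hrep : IsZeckRep x δ := ⟨h1, h0, h2, L0, hL0, hsum⟩
  obtain ⟨I, L, hL, hE⟩ := rep_master x δ hrep
  intro M
  have ht2 : 2 ≤ t := by
    by_contra hc
    have := h0 t (by omega)
    omega
  have htL : t ≤ L := by
    by_contra hc
    have := hL t (by omega)
    omega
  -- the auxiliary digit sequence of opposite parity
  set δ' : ℕ → ℕ := fun k => if (k + t) % 2 = 1 then δ k else 0 with hδ'
  have h1' : ∀ k, δ' k ≤ 1 := by
    intro k
    simp only [hδ']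
    split
    · exact h1 k
    · exact Nat.zero_le 1
  have hδt1 : δ (t+1) = 0 := by
    by_contra hc
    have h1t := h1 (t+1)
    have : δ (t+1) = 1 := by omega
    have := h2 t this
    omega
  have h2' : ∀ k, δ' (k+1) = 1 → δ' k = 0 := by
    intro k hk
    simp only [hδ'] at hk ⊢
    split at hk
    · have := h2 k hk
      split <;> simp [this]
    · exact absurd hk (by omega)
  have ht3' : ∀ k < t + 3, δ' k = 0 := by
    intro k hk
    simp only [hδ']
    split
    · rename_i hp
      have : k < t ∨ k = t + 1 := by omega
      rcases this with hlt | rfl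
      · exact ht k hlt
      · exact hδt1
    · rfl
  have hB : ∑ k ∈ range (L+1), (δ' k : ℝ) * pr ^ k ≤ phi * pr ^ (t+3) :=
    tail_bound δ' h1' h2' (L+1) (t+3) ht3'
  -- lower bound for the signed error
  set E : ℝ := (x : ℝ) * phi - I with hEdef
  have hE' : pr ^ t - ∑ k ∈ range (L+1), (δ' k : ℝ) * pr ^ k ≤ (-1)^(t+1) * E := by
    rw [hE, Finset.mul_sum]
    have hIndic : (pr ^ t : ℝ) = ∑ k ∈ range (L+1), (if k = t then pr ^ t else 0) := by
      rw [Finset.sum_ite_eq' (range (L+1)) t (fun _ => pr ^ t)]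
      rw [if_pos (Finset.mem_range.2 (by omega))]
    rw [hIndic, ← Finset.sum_sub_distrib]
    apply Finset.sum_le_sum
    intro k _
    have hsign : ((-1:ℝ))^(t+1) * (-1)^(k+1) = (-1)^(k+t) := by
      rw [← pow_add, show (t+1)+(k+1) = (k+t)+2 from by ring, pow_add]
      norm_num
    by_cases hkt : k = t
    · have hδ'k : (δ' k : ℝ) = 0 := by
        simp only [hδ', hkt]
        rw [if_neg (by omega)]
        norm_num
      rw [if_pos hkt, hδ'k, hkt, ht1]
      have hm1 : ((-1:ℝ))^(t+1) * (-1)^(t+1) = 1 := by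
        rw [← pow_add]
        exact Even.neg_one_pow ⟨t+1, by ring⟩
      have heq : (-1:ℝ)^(t+1) * (((1:ℕ) : ℝ) * ((-1)^(t+1) * pr ^ t)) = pr ^ t := by
        push_cast
        linear_combination pr ^ t * hm1
      rw [heq]
      norm_num
    · rw [if_neg hkt]
      by_cases hp : (k + t) % 2 = 1
      · have hδ'k : (δ' k : ℝ) = (δ k : ℝ) := by simp only [hδ', if_pos hp]
        have hm1 : ((-1:ℝ))^(t+1) * (-1)^(k+1) = -1 := by
          rw [hsign]
          exact Odd.neg_one_pow (Nat.odd_iff.2 hp)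
        have heq : (-1:ℝ)^(t+1) * ((δ k : ℝ) * ((-1)^(k+1) * pr ^ k))
            = -((δ k : ℝ) * pr ^ k) := by
          linear_combination ((δ k : ℝ) * pr ^ k) * hm1
        rw [heq, hδ'k]
        linarith
      · have hδ'k : (δ' k : ℝ) = 0 := by simp only [hδ', if_neg hp]; norm_num
        have hm1 : ((-1:ℝ))^(t+1) * (-1)^(k+1) = 1 := by
          rw [hsign]
          exact Even.neg_one_pow (Nat.even_iff.2 (by omega))
        have heq : (-1:ℝ)^(t+1) * ((δ k : ℝ) * ((-1)^(k+1) * pr ^ k))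
            = (δ k : ℝ) * pr ^ k := by
          linear_combination ((δ k : ℝ) * pr ^ k) * hm1
        rw [heq, hδ'k]
        have : (0:ℝ) ≤ (δ k : ℝ) * pr ^ k :=
          mul_nonneg (Nat.cast_nonneg _) (pow_nonneg pr_pos.le k)
        linarith
  have habsE : (-1:ℝ)^(t+1) * E ≤ |E| := by
    calc (-1:ℝ)^(t+1) * E ≤ |(-1:ℝ)^(t+1) * E| := le_abs_self _
      _ = |E| := by rw [abs_mul, abs_pow, abs_neg, abs_one, one_pow, one_mul]
  have hval : pr ^ t - phi * pr ^ (t+3) = pr ^ (t+1) := by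
    linear_combination (-(pr ^ t)) * pr_sq - pr ^ (t+2) * phi_mul_pr
  have hlowE : pr ^ (t+1) ≤ |E| := by linarith
  by_cases hMI : M = I
  · rw [hMI]
    exact hlowE
  · have hd : (1:ℝ) ≤ |(I : ℝ) - (M : ℝ)| := by
      have hne : (I - M : ℤ) ≠ 0 := sub_ne_zero.2 (fun hc => hMI hc.symm)
      have h5 := Int.one_le_abs hne
      have : ((1:ℤ):ℝ) ≤ ((|I - M| : ℤ) : ℝ) := by exact_mod_cast h5
      rwa [Int.cast_abs, Int.cast_sub, Int.cast_one] at this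
    have hup : |E| ≤ phi * pr ^ t := by
      rw [hE]
      exact abs_err_bound δ h1 h2 (L+1) t ht
    have hpt : pr ^ t ≤ pr ^ 2 := pow_le_pow_of_le_one pr_pos.le pr_lt_one.le ht2
    have hpt1 : pr ^ (t+1) ≤ pr ^ 3 := pow_le_pow_of_le_one pr_pos.le pr_lt_one.le (by omega)
    have e1 : phi * pr ^ t ≤ phi * pr ^ 2 := mul_le_mul_of_nonneg_left hpt phi_pos.le
    have e2 : phi * pr ^ 2 + pr ^ 3 = 3 * pr - 1 := by
      linear_combination pr ^ 2 * phi_eq + (2 * pr - 1) * pr_sq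
    have hkey : phi * pr ^ t + pr ^ (t+1) ≤ 1 := by
      have h23 := pr_lt_two_thirds
      linarith
    have h4 : |(I:ℝ) - M| ≤ |E| + |(x:ℝ) * phi - M| := by
      have hid : (I:ℝ) - M = -E + ((x:ℝ) * phi - M) := by rw [hEdef]; ring
      rw [hid]
      calc |(-E) + ((x:ℝ) * phi - M)| ≤ |(-E)| + |(x:ℝ) * phi - M| := abs_add_le _ _
        _ = |E| + |(x:ℝ) * phi - M| := by rw [abs_neg]
    linarith

/-! ### Existence of Zeckendorf representations -/

local instance : IsTrans ℕ fun a b ↦ b + 2 ≤ a where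
  trans _a _b _c hba hcb := hcb.trans <| le_self_add.trans hba

open Classical in
lemma exists_rep (n : ℕ) : ∃ δ, IsZeckRep n δ := by
  classical
  set l := n.zeckendorf with hl
  have hrep : l.IsZeckendorfRep := Nat.isZeckendorfRep_zeckendorf n
  have hchain : (l ++ [0]).Chain' (fun a b => b + 2 ≤ a) := hrep
  have hpw' : (l ++ [0]).Pairwise (fun a b => b + 2 ≤ a) :=
    List.isChain_iff_pairwise.mp hchain
  rw [List.pairwise_append] at hpw'
  have hpw : l.Pairwise (fun a b => b + 2 ≤ a) := hpw'.1
  have hge2 : ∀ a ∈ l, 2 ≤ a := by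
    intro a ha
    have := hpw'.2.2 a ha 0 (by simp)
    omega
  have hfar : ∀ a ∈ l, ∀ b ∈ l, a ≠ b → b + 2 ≤ a ∨ a + 2 ≤ b := by
    have hsym : l.Pairwise (fun a b => b + 2 ≤ a ∨ a + 2 ≤ b) :=
      hpw.imp (fun h => Or.inl h)
    intro a ha b hb hab
    exact (haveI : Std.Symm (fun a b : ℕ => b + 2 ≤ a ∨ a + 2 ≤ b) := ⟨fun x y h => h.symm⟩; hsym.forall ha hb hab)
  have hnodup : l.Nodup := hpw.imp (fun {a b} h => by omega)
  refine ⟨fun k => if k ∈ l then 1 else 0, ?_, ?_, ?_, ?_⟩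
  · intro k; dsimp only; split <;> omega
  · intro k hk
    dsimp only
    split
    · rename_i hmem
      have := hge2 k hmem
      omega
    · rfl
  · intro k hk
    dsimp only at hk ⊢
    split at hk
    · rename_i hmem
      split
      · rename_i hmem2
        have := hfar k hmem2 (k+1) hmem (by omega)
        omega
      · rfl
    · exact absurd hk (by omega)
  · refine ⟨l.sum, ?_, ?_⟩
    · intro k hk
      dsimp only
      split
      · rename_i hmem
        have := List.single_le_sum (fun x _ => Nat.zero_le x) k hmem
        omega
      · rfl
    · have hsum : n = (l.map Nat.fib).sum := (Nat.sum_zeckendorf_fib n).symm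
      rw [hsum, ← List.sum_toFinset _ hnodup]
      have hfilter : l.toFinset = (range (l.sum + 1)).filter (· ∈ l) := by
        ext k
        simp only [List.mem_toFinset, Finset.mem_filter, Finset.mem_range]
        constructor
        · intro hk
          exact ⟨by have := List.single_le_sum (fun x _ => Nat.zero_le x) k hk; omega, hk⟩
        · exact fun hk => hk.2
      rw [hfilter, Finset.sum_filter]
      apply Finset.sum_congr rfl
      intro k _
      dsimp only
      split <;> simp

lemma zeckDigit_spec (n : ℕ) : IsZeckRep n (zeckDigit n) := by
  have hex := exists_rep n
  have : zeckDigit n = hex.choose := by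
    funext k
    rw [zeckDigit, dif_pos hex]
  rw [this]
  exact hex.choose_spec

lemma digits_vanish_of_close (x t : ℕ) (M : ℤ)
    (hx : |(x : ℝ) * phi - M| < pr ^ (t+1)) : ∀ ℓ ≤ t, zeckDigit x ℓ = 0 := by
  intro ℓ hℓ
  by_contra hne
  classical
  have hrep := zeckDigit_spec x
  have h1 := hrep.1
  have hone : zeckDigit x ℓ = 1 := by have := h1 ℓ; omega
  have hex : ∃ j, zeckDigit x j = 1 := ⟨ℓ, hone⟩
  have hj1 : zeckDigit x (Nat.find hex) = 1 := Nat.find_spec hex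
  have hjlt : ∀ k < Nat.find hex, zeckDigit x k = 0 := by
    intro k hk
    have := Nat.find_min hex hk
    have := h1 k
    omega
  have hjℓ : Nat.find hex ≤ ℓ := Nat.find_min' hex hone
  have hlow := rep_lower x _ hrep (Nat.find hex) hj1 hjlt M
  have hmono : pr ^ (t+1) ≤ pr ^ (Nat.find hex + 1) :=
    pow_le_pow_of_le_one pr_pos.le pr_lt_one.le (by omega)
  linarith

/-! ### Size bounds -/

lemma fib_sum_lt (δ : ℕ → ℕ) (h1 : ∀ k, δ k ≤ 1) (h0 : ∀ k < 2, δ k = 0)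
    (h2 : ∀ k, δ (k+1) = 1 → δ k = 0) :
    ∀ T, 1 ≤ T → ∑ k ∈ range T, δ k * Nat.fib k < Nat.fib T := by
  intro T
  induction T using Nat.strong_induction_on with
  | _ T ih =>
  intro hT
  match T, hT with
  | 1, _ => simp
  | 2, _ =>
      rw [Finset.sum_range_succ, Finset.sum_range_one, h0 0 (by omega), h0 1 (by omega)]
      simp
  | (R+3), _ =>
      rw [Finset.sum_range_succ]
      have hfib : Nat.fib (R+3) = Nat.fib (R+1) + Nat.fib (R+2) := by
        rw [show R+3 = (R+1)+2 from by omega, Nat.fib_add_two]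
      by_cases hd : δ (R+2) = 1
      · have hd1 : δ (R+1) = 0 := h2 _ hd
        rw [Finset.sum_range_succ, hd1]
        have ihv := ih (R+1) (by omega) (by omega)
        have hfe : δ (R+2) * Nat.fib (R+2) = Nat.fib (R+2) := by rw [hd, one_mul]
        omega
      · have hd0 : δ (R+2) = 0 := by have := h1 (R+2); omega
        rw [hd0, zero_mul, add_zero]
        have ihv := ih (R+2) (by omega) (by omega)
        have hmono : Nat.fib (R+2) ≤ Nat.fib (R+3) := Nat.fib_mono (by omega)
        omega

lemma rep_lt_fib (x : ℕ) (δ : ℕ → ℕ) (h : IsZeckRep x δ) (T : ℕ)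
    (hT : ∀ k, T < k → δ k = 0) : x < Nat.fib (T+1) := by
  obtain ⟨h1, h0, h2, L, hL, hsum⟩ := h
  have key : x = ∑ k ∈ range (T+1), δ k * Nat.fib k := by
    rw [hsum]
    rcases le_total L T with hc | hc
    · apply Finset.sum_subset (Finset.range_subset_range.2 (by omega))
      intro k hk hnk
      have : L < k := by
        simp only [Finset.mem_range] at hk hnk
        omega
      rw [hL k this, zero_mul]
    · symm
      apply Finset.sum_subset (Finset.range_subset_range.2 (by omega))
      intro k hk hnk
      have : T < k := by
        simp only [Finset.mem_range] at hk hnk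
        omega
      rw [hT k this, zero_mul]
  rw [key]
  exact fib_sum_lt δ h1 h0 h2 (T+1) (by omega)

lemma fib_le_of_digit (x : ℕ) (δ : ℕ → ℕ) (h : IsZeckRep x δ) (ℓ : ℕ) (hℓ : δ ℓ = 1) :
    Nat.fib ℓ ≤ x := by
  obtain ⟨h1, h0, h2, L, hL, hsum⟩ := h
  have hlL : ℓ ≤ L := by
    by_contra hc
    have := hL ℓ (by omega)
    omega
  rw [hsum]
  calc Nat.fib ℓ = δ ℓ * Nat.fib ℓ := by rw [hℓ, one_mul]
    _ ≤ ∑ k ∈ range (L+1), δ k * Nat.fib k :=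
      Finset.single_le_sum (f := fun k => δ k * Nat.fib k) (fun k _ => Nat.zero_le _)
        (Finset.mem_range.2 (by omega))

lemma high_digit_zero (x T : ℕ) (hx : x < Nat.fib (T+1)) (ℓ : ℕ) (hℓ : T < ℓ) :
    zeckDigit x ℓ = 0 := by
  by_contra hne
  have hrep := zeckDigit_spec x
  have h1 := hrep.1 ℓ
  have hone : zeckDigit x ℓ = 1 := by omega
  have hfx := fib_le_of_digit x _ hrep ℓ hone
  have hmono : Nat.fib (T+1) ≤ Nat.fib ℓ := Nat.fib_mono (by omega)
  omega

/-- If the Zeckendorf digits of `n` are supported in `[N₁, N₂]` and those of `m` in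
`[M₁, M₂]`, then the Zeckendorf digits of `n + m` and of `|n - m|` vanish at all indices
`ℓ < min N₁ M₁ - 3` and all indices `ℓ > max N₂ M₂ + 2`. -/
theorem zeck_digits_add_and_sub (n m N₁ N₂ M₁ M₂ : ℕ)
    (hn : ∀ ℓ, (ℓ < N₁ ∨ N₂ < ℓ) → zeckDigit n ℓ = 0)
    (hm : ∀ ℓ, (ℓ < M₁ ∨ M₂ < ℓ) → zeckDigit m ℓ = 0) :
    ∀ ℓ, (ℓ + 3 < min N₁ M₁ ∨ max N₂ M₂ + 2 < ℓ) →
      zeckDigit (n + m) ℓ = 0 ∧ zeckDigit ((n : ℤ) - (m : ℤ)).natAbs ℓ = 0 := by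
  intro ℓ hcase
  rcases hcase with hlow | hhigh
  · -- low indices
    have hL₀n : ∀ k < min N₁ M₁, zeckDigit n k = 0 := fun k hk => hn k (Or.inl (by omega))
    have hL₀m : ∀ k < min N₁ M₁, zeckDigit m k = 0 := fun k hk => hm k (Or.inl (by omega))
    obtain ⟨In, hIn⟩ := rep_upper n _ (zeckDigit_spec n) (min N₁ M₁) hL₀n
    obtain ⟨Im, hIm⟩ := rep_upper m _ (zeckDigit_spec m) (min N₁ M₁) hL₀m
    have hp4 : pr ^ (min N₁ M₁) ≤ pr ^ (ℓ+4) :=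
      pow_le_pow_of_le_one pr_pos.le pr_lt_one.le (by omega)
    have h3 : 2 * (phi * pr ^ 3) < 1 := by
      have := half_lt_pr
      nlinarith [phi_mul_pr, pr_sq, pr_pos]
    have hval : 2 * (phi * pr ^ (ℓ+4)) < pr ^ (ℓ+1) := by
      have hpos : (0:ℝ) < pr ^ (ℓ+1) := pow_pos pr_pos _
      calc 2 * (phi * pr ^ (ℓ+4)) = (2 * (phi * pr ^ 3)) * pr ^ (ℓ+1) := by ring
        _ < 1 * pr ^ (ℓ+1) := mul_lt_mul_of_pos_right h3 hpos
        _ = pr ^ (ℓ+1) := one_mul _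
    have hbn : |(n:ℝ) * phi - In| ≤ phi * pr ^ (ℓ+4) :=
      le_trans hIn (mul_le_mul_of_nonneg_left hp4 phi_pos.le)
    have hbm : |(m:ℝ) * phi - Im| ≤ phi * pr ^ (ℓ+4) :=
      le_trans hIm (mul_le_mul_of_nonneg_left hp4 phi_pos.le)
    constructor
    · refine digits_vanish_of_close (n+m) ℓ (In + Im) ?_ ℓ le_rfl
      have hid : ((n+m : ℕ):ℝ) * phi - ((In + Im : ℤ):ℝ)
          = ((n:ℝ)*phi - In) + ((m:ℝ)*phi - Im) := by push_cast; ring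
      calc |((n+m:ℕ):ℝ) * phi - ((In + Im:ℤ):ℝ)|
          = |((n:ℝ)*phi - In) + ((m:ℝ)*phi - Im)| := by rw [hid]
        _ ≤ |(n:ℝ)*phi - In| + |(m:ℝ)*phi - Im| := abs_add_le _ _
        _ ≤ 2 * (phi * pr ^ (ℓ+4)) := by linarith
        _ < pr ^ (ℓ+1) := hval
    · refine digits_vanish_of_close _ ℓ (|In - Im|) ?_ ℓ le_rfl
      have hxr : ((((n : ℤ) - (m : ℤ)).natAbs : ℕ) : ℝ) = |(n:ℝ) - (m:ℝ)| := by
        rw [Nat.cast_natAbs]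
        push_cast
        ring_nf
      have hMr : ((|In - Im| : ℤ) : ℝ) = |(In:ℝ) - (Im:ℝ)| := by
        rw [Int.cast_abs]
        push_cast
        ring_nf
      rw [hxr, hMr]
      have h1 : |(n:ℝ) - m| * phi = |((n:ℝ) - m) * phi| := by
        rw [abs_mul, abs_of_pos phi_pos]
      calc abs (abs ((n:ℝ) - m) * phi - abs ((In:ℝ) - Im))
          = abs (abs (((n:ℝ) - m) * phi) - abs ((In:ℝ) - Im)) := by rw [h1]
        _ ≤ abs (((n:ℝ) - m) * phi - ((In:ℝ) - Im)) := abs_abs_sub_abs_le_abs_sub _ _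
        _ = abs (((n:ℝ)*phi - In) - ((m:ℝ)*phi - Im)) := by ring_nf
        _ ≤ abs ((n:ℝ)*phi - In) + abs ((m:ℝ)*phi - Im) := abs_sub _ _
        _ ≤ 2 * (phi * pr ^ (ℓ+4)) := by linarith
        _ < pr ^ (ℓ+1) := hval
  · -- high indices
    have hnfib : n < Nat.fib (N₂+1) :=
      rep_lt_fib n _ (zeckDigit_spec n) N₂ (fun k hk => hn k (Or.inr hk))
    have hmfib : m < Nat.fib (M₂+1) :=
      rep_lt_fib m _ (zeckDigit_spec m) M₂ (fun k hk => hm k (Or.inr hk))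
    have h1 : Nat.fib (N₂+1) ≤ Nat.fib (max N₂ M₂ + 1) := Nat.fib_mono (by omega)
    have h2 : Nat.fib (M₂+1) ≤ Nat.fib (max N₂ M₂ + 1) := Nat.fib_mono (by omega)
    have h3 : Nat.fib (max N₂ M₂ + 1) ≤ Nat.fib (max N₂ M₂ + 2) := Nat.fib_mono (by omega)
    have h4 : Nat.fib (max N₂ M₂ + 3) = Nat.fib (max N₂ M₂ + 1) + Nat.fib (max N₂ M₂ + 2) := by
      rw [show max N₂ M₂ + 3 = (max N₂ M₂ + 1) + 2 from by omega, Nat.fib_add_two]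
    have hmax : n + m < Nat.fib (max N₂ M₂ + 2 + 1) := by
      rw [show max N₂ M₂ + 2 + 1 = max N₂ M₂ + 3 from by omega]
      omega
    have hle : ((n:ℤ) - m).natAbs ≤ n + m := by
      have := Int.natAbs_sub_le (n:ℤ) (m:ℤ)
      simpa using this
    exact ⟨high_digit_zero (n+m) (max N₂ M₂ + 2) hmax ℓ (by omega),
      high_digit_zero _ (max N₂ M₂ + 2) (by omega) ℓ (by omega)⟩
end

section
/- For every integer ℓ ≥ 2 and every n ∈ ℕ there exists 0 ≤ y < F_ℓ such that all Zeckendorf digits of n + y with index < ℓ vanish, i.e. v(n + y, ℓ) = 0. -/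
lemma zsum_lt (δ : ℕ → ℕ) (h1 : ∀ k, δ k ≤ 1) (h2 : ∀ k < 2, δ k = 0)
    (h3 : ∀ k, δ (k+1) = 1 → δ k = 0) :
    ∀ N, 1 ≤ N → ∑ k ∈ Finset.range N, δ k * Nat.fib k < Nat.fib N := by
  intro N
  induction N using Nat.strong_induction_on with
  | _ N ih =>
    intro hN
    match N, hN with
    | 1, _ => simp [h2 0 (by norm_num)]
    | 2, _ =>
      simp [Finset.sum_range_succ, h2 0 (by norm_num), h2 1 (by norm_num)]
    | (P+3), _ =>
      rw [Finset.sum_range_succ]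
      have hfib : Nat.fib (P+3) = Nat.fib (P+1) + Nat.fib (P+2) := by
        rw [show P + 3 = (P+1) + 2 from rfl, Nat.fib_add_two]
      by_cases hδ : δ (P+2) = 1
      · have h0 : δ (P+1) = 0 := h3 _ hδ
        have he : ∑ k ∈ Finset.range (P+2), δ k * Nat.fib k
            = ∑ k ∈ Finset.range (P+1), δ k * Nat.fib k := by
          rw [Finset.sum_range_succ, h0]; ring
        have hi := ih (P+1) (by omega) (by omega)
        rw [he, hδ]
        omega
      · have h0 : δ (P+2) = 0 := by have := h1 (P+2); omega
        have hi := ih (P+2) (by omega) (by omega)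
        have hm : Nat.fib (P+2) ≤ Nat.fib (P+3) := Nat.fib_mono (by omega)
        rw [h0]
        omega

lemma sum_ext (δ : ℕ → ℕ) {T : ℕ} (h : ∀ k, T < k → δ k = 0) {N : ℕ} (hN : T + 1 ≤ N) :
    ∑ k ∈ Finset.range N, δ k * Nat.fib k = ∑ k ∈ Finset.range (T+1), δ k * Nat.fib k := by
  refine (Finset.sum_subset (fun x hx => ?_) (fun x hx hx2 => ?_)).symm
  · simp only [Finset.mem_range] at *; omega
  · simp only [Finset.mem_range] at hx hx2
    rw [h x (by omega)]; ring

lemma rep_sum {M : ℕ} {δ : ℕ → ℕ} (h : IsZeckRep M δ) {L : ℕ} (hL : ∀ k, L < k → δ k = 0) :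
    M = ∑ k ∈ Finset.range (L+1), δ k * Nat.fib k := by
  obtain ⟨-, -, -, L₀, hL₀, hsum⟩ := h
  have e1 := sum_ext δ hL₀ (N := max (L+1) (L₀+1)) (by omega)
  have e2 := sum_ext δ hL (N := max (L+1) (L₀+1)) (by omega)
  rw [hsum, ← e1, e2]

lemma sum_update (δ : ℕ → ℕ) (v L N : ℕ) (hLN : L < N) :
    ∑ k ∈ Finset.range N, Function.update δ L v k * Nat.fib k + δ L * Nat.fib L
      = ∑ k ∈ Finset.range N, δ k * Nat.fib k + v * Nat.fib L := by
  have hmem : L ∈ Finset.range N := Finset.mem_range.mpr hLN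
  rw [← Finset.add_sum_erase _ (fun k => δ k * Nat.fib k) hmem,
      ← Finset.add_sum_erase _ (fun k => Function.update δ L v k * Nat.fib k) hmem]
  have hE : ∑ k ∈ (Finset.range N).erase L, Function.update δ L v k * Nat.fib k
      = ∑ k ∈ (Finset.range N).erase L, δ k * Nat.fib k :=
    Finset.sum_congr rfl fun x hx => by
      rw [Function.update_of_ne (Finset.ne_of_mem_erase hx)]
  rw [hE, Function.update_self]
  ring

lemma rep_mem_le {n : ℕ} {δ : ℕ → ℕ} (h : IsZeckRep n δ) {k : ℕ} (hk : δ k = 1) :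
    Nat.fib k ≤ n := by
  obtain ⟨h1, h2, h3, L₀, hL₀, hsum⟩ := h
  have hkL : k ≤ L₀ := by
    by_contra hc
    rw [hL₀ k (by omega)] at hk; omega
  have : δ k * Nat.fib k ≤ ∑ j ∈ Finset.range (L₀+1), δ j * Nat.fib j :=
    Finset.single_le_sum (f := fun j => δ j * Nat.fib j) (fun i _ => Nat.zero_le _)
      (Finset.mem_range.mpr (by omega))
  rw [hk] at this; omega

lemma digit_ge_two {n : ℕ} {δ : ℕ → ℕ} (h : IsZeckRep n δ) {k : ℕ} (hk : δ k = 1) : 2 ≤ k := by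
  by_contra hc
  rw [h.2.1 k (by omega)] at hk; omega

lemma rep_top {n : ℕ} {δ : ℕ → ℕ} (h : IsZeckRep n δ) {L : ℕ} (hL : δ L = 1)
    (hhi : ∀ k, L < k → δ k = 0) : Nat.fib L ≤ n ∧ n < Nat.fib (L+1) := by
  refine ⟨rep_mem_le h hL, ?_⟩
  show n < Nat.fib (L+1)
  have hL2 : 2 ≤ L := digit_ge_two h hL
  obtain ⟨P, rfl⟩ : ∃ P, L = P + 2 := ⟨L - 2, by omega⟩
  have h0 : δ (P+1) = 0 := h.2.2.1 (P+1) hL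
  have hsum := rep_sum h hhi
  rw [Finset.sum_range_succ, Finset.sum_range_succ, h0, hL] at hsum
  have hlt := zsum_lt δ h.1 h.2.1 h.2.2.1 (P+1) (by omega)
  have hfib : Nat.fib (P+2+1) = Nat.fib (P+1) + Nat.fib (P+2) := by
    rw [show P + 2 + 1 = (P+1) + 2 from rfl, Nat.fib_add_two]
  omega

lemma zero_rep {δ : ℕ → ℕ} (h : IsZeckRep 0 δ) : ∀ k, δ k = 0 := by
  intro k
  by_contra hc
  have hk1 : δ k = 1 := by have := h.1 k; omega
  have := rep_mem_le h hk1
  have h2 := digit_ge_two h hk1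
  have : 1 ≤ Nat.fib k := Nat.fib_pos.mpr (by omega)
  omega

lemma exists_top {n : ℕ} {δ : ℕ → ℕ} (h : IsZeckRep n δ) (hn : n ≠ 0) :
    ∃ L, δ L = 1 ∧ ∀ k, L < k → δ k = 0 := by
  obtain ⟨h1, h2, h3, L₀, hL₀, hsum⟩ := h
  set S := (Finset.range (L₀+1)).filter (fun k => δ k = 1) with hS
  have hne : S.Nonempty := by
    by_contra hc
    apply hn
    rw [hsum]
    refine Finset.sum_eq_zero fun x hx => ?_
    have hne1 : δ x ≠ 1 := fun h' => hc ⟨x, Finset.mem_filter.mpr ⟨hx, h'⟩⟩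
    have h1x := h1 x
    have hz : δ x = 0 := by omega
    rw [hz]; ring
  refine ⟨S.max' hne, (Finset.mem_filter.mp (S.max'_mem hne)).2, fun k hk => ?_⟩
  by_contra hc
  have hk1 : δ k = 1 := by have := h1 k; omega
  have hkL : k ≤ L₀ := by
    by_contra hc2; rw [hL₀ k (by omega)] at hk1; omega
  have : k ∈ S := Finset.mem_filter.mpr ⟨Finset.mem_range.mpr (by omega), hk1⟩
  have := S.le_max' k this
  omega

lemma clear_bit {n : ℕ} {δ : ℕ → ℕ} (h : IsZeckRep n δ) {L : ℕ} (hL : δ L = 1) :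
    IsZeckRep (n - Nat.fib L) (Function.update δ L 0) := by
  obtain ⟨h1, h2, h3, L₀, hL₀, hsum⟩ := h
  have hLL₀ : L ≤ L₀ := by
    by_contra hc; rw [hL₀ L (by omega)] at hL; omega
  refine ⟨fun k => ?_, fun k hk => ?_, fun k hk => ?_, L₀, fun k hk => ?_, ?_⟩
  · rcases eq_or_ne k L with rfl | hne
    · simp
    · rw [Function.update_of_ne hne]; exact h1 k
  · have hkL : k ≠ L := by
      have := digit_ge_two ⟨h1, h2, h3, L₀, hL₀, hsum⟩ hL; omega
    rw [Function.update_of_ne hkL]; exact h2 k hk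
  · rcases eq_or_ne (k+1) L with he | hne
    · rw [he, Function.update_self] at hk; omega
    · rw [Function.update_of_ne hne] at hk
      have := h3 k hk
      rcases eq_or_ne k L with rfl | hne2
      · simp
      · rw [Function.update_of_ne hne2]; exact this
  · rw [Function.update_of_ne (by omega)]; exact hL₀ k hk
  · have := sum_update δ 0 L (L₀+1) (by omega)
    rw [hL] at this
    have hfn : Nat.fib L ≤ n := rep_mem_le ⟨h1, h2, h3, L₀, hL₀, hsum⟩ hL
    omega

lemma zeck_unique : ∀ n, ∀ δ δ' : ℕ → ℕ, IsZeckRep n δ → IsZeckRep n δ' → δ = δ' := by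
  intro n
  induction n using Nat.strong_induction_on with
  | _ n ih =>
    intro δ δ' h h'
    rcases eq_or_ne n 0 with rfl | hn
    · funext k; rw [zero_rep h k, zero_rep h' k]
    · obtain ⟨L, hL, hhi⟩ := exists_top h hn
      obtain ⟨L', hL', hhi'⟩ := exists_top h' hn
      obtain ⟨ha1, ha2⟩ := rep_top h hL hhi
      obtain ⟨hb1, hb2⟩ := rep_top h' hL' hhi'
      have hLL : L = L' := by
        by_contra hc
        rcases Nat.lt_or_ge L L' with hlt | hge
        · have : Nat.fib (L+1) ≤ Nat.fib L' := Nat.fib_mono (by omega)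
          omega
        · have : Nat.fib (L'+1) ≤ Nat.fib L := Nat.fib_mono (by omega)
          omega
      subst hLL
      have hrec := ih (n - Nat.fib L) (by
        have : 1 ≤ Nat.fib L := Nat.fib_pos.mpr (by have := digit_ge_two h hL; omega)
        omega) _ _ (clear_bit h hL) (clear_bit h' hL')
      funext k
      rcases eq_or_ne k L with rfl | hne
      · rw [hL, hL']
      · have := congrFun hrec k
        rwa [Function.update_of_ne hne, Function.update_of_ne hne] at this

lemma fib_gt (n : ℕ) : n < Nat.fib (n+2) := by
  induction n with
  | zero => simp
  | succ m ih =>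
    have h1 : 1 ≤ Nat.fib (m+1) := Nat.fib_pos.mpr (by omega)
    have h2 : Nat.fib (m+1+2) = Nat.fib (m+1) + Nat.fib (m+1+1) := Nat.fib_add_two
    have h3 : Nat.fib (m+1+1) = Nat.fib (m+2) := by norm_num
    omega

lemma zeck_exists : ∀ n, ∃ δ, IsZeckRep n δ := by
  intro n
  induction n using Nat.strong_induction_on with
  | _ n ih =>
    rcases eq_or_ne n 0 with rfl | hn
    · exact ⟨fun _ => 0, fun _ => Nat.zero_le 1, fun k _ => rfl, fun k _ => rfl,
        0, fun k _ => rfl, by simp⟩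
    · set S := (Finset.range (n+3)).filter (fun k => Nat.fib k ≤ n) with hSdef
      have h2S : 2 ∈ S := Finset.mem_filter.mpr
        ⟨Finset.mem_range.mpr (by omega), by simp [Nat.fib]; omega⟩
      have hne : S.Nonempty := ⟨2, h2S⟩
      set L := S.max' hne with hLdef
      have hL2 : 2 ≤ L := S.le_max' 2 h2S
      have hfLn : Nat.fib L ≤ n := (Finset.mem_filter.mp (S.max'_mem hne)).2
      have hnf : n < Nat.fib (L+1) := by
        by_contra hc
        push_neg at hc
        have hL1 : L + 1 ≤ n + 2 := by
          by_contra hc2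
          have : Nat.fib (n+2) ≤ Nat.fib (L+1) := Nat.fib_mono (by omega)
          have := fib_gt n
          omega
        have : L + 1 ∈ S := Finset.mem_filter.mpr ⟨Finset.mem_range.mpr (by omega), hc⟩
        have := S.le_max' (L+1) this
        omega
      have hfpos : 1 ≤ Nat.fib L := Nat.fib_pos.mpr (by omega)
      obtain ⟨δ', hδ'⟩ := ih (n - Nat.fib L) (by omega)
      have hfibL : Nat.fib (L+1) = Nat.fib (L-1) + Nat.fib L := by
        have hL1 : L - 1 + 2 = L + 1 := by omega
        have hL0 : L - 1 + 1 = L := by omega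
        rw [← hL1, Nat.fib_add_two, hL0]
      have hhi' : ∀ k, L - 2 < k → δ' k = 0 := by
        intro k hk
        by_contra hc
        have hk1 : δ' k = 1 := by have := hδ'.1 k; omega
        have hfk : Nat.fib k ≤ n - Nat.fib L := rep_mem_le hδ' hk1
        have : Nat.fib (L-1) ≤ Nat.fib k := Nat.fib_mono (by omega)
        omega
      refine ⟨Function.update δ' L 1, fun k => ?_, fun k hk => ?_, fun k hk => ?_,
        L, fun k hk => ?_, ?_⟩
      · rcases eq_or_ne k L with rfl | hne2
        · simp
        · rw [Function.update_of_ne hne2]; exact hδ'.1 k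
      · rw [Function.update_of_ne (by omega)]; exact hδ'.2.1 k hk
      · rcases eq_or_ne (k+1) L with he | hne2
        · rw [Function.update_of_ne (by omega)]
          exact hhi' k (by omega)
        · rw [Function.update_of_ne hne2] at hk
          have hk2 : 2 ≤ k + 1 := digit_ge_two hδ' hk
          have : k + 1 ≤ L - 2 := by
            by_contra hc
            rw [hhi' (k+1) (by omega)] at hk; omega
          rw [Function.update_of_ne (by omega)]
          exact hδ'.2.2.1 k hk
      · rw [Function.update_of_ne (by omega)]
        exact hhi' k (by omega)
      · have hsu := sum_update δ' 1 L (L+1) (by omega)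
        have hδ'L : δ' L = 0 := hhi' L (by omega)
        have hs' : n - Nat.fib L = ∑ k ∈ Finset.range (L+1), δ' k * Nat.fib k :=
          rep_sum hδ' (fun k hk => hhi' k (by omega))
        rw [hδ'L] at hsu
        omega

lemma set_bit {M : ℕ} {δ : ℕ → ℕ} (h : IsZeckRep M δ) {j : ℕ} (hj : 2 ≤ j)
    (hlow : ∀ k, k ≤ j → δ k = 0) (hnext : δ (j+1) = 0) :
    IsZeckRep (M + Nat.fib j) (Function.update δ j 1) := by
  obtain ⟨h1, h2, h3, L₀, hL₀, hsum⟩ := h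
  refine ⟨fun k => ?_, fun k hk => ?_, fun k hk => ?_, max L₀ j, fun k hk => ?_, ?_⟩
  · rcases eq_or_ne k j with rfl | hne
    · simp
    · rw [Function.update_of_ne hne]; exact h1 k
  · rw [Function.update_of_ne (by omega)]; exact h2 k hk
  · rcases eq_or_ne (k+1) j with he | hne
    · rw [Function.update_of_ne (by omega)]
      exact hlow k (by omega)
    · rw [Function.update_of_ne hne] at hk
      have hkj : k ≠ j := by rintro rfl; rw [hnext] at hk; omega
      rw [Function.update_of_ne hkj]
      exact h3 k hk
  · rw [Function.update_of_ne (by omega)]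
    exact hL₀ k (by omega)
  · have hsu := sum_update δ 1 j (max L₀ j + 1) (by omega)
    have hδj : δ j = 0 := hlow j le_rfl
    have hM : M = ∑ k ∈ Finset.range (max L₀ j + 1), δ k * Nat.fib k :=
      rep_sum ⟨h1, h2, h3, L₀, hL₀, hsum⟩ (fun k hk => hL₀ k (by omega))
    rw [hδj] at hsu
    omega

lemma carry : ∀ d j M L, ∀ δ : ℕ → ℕ, IsZeckRep M δ → (∀ k, L < k → δ k = 0) →
    L + 2 ≤ j + d → 2 ≤ j → (∀ k, k ≤ j → δ k = 0) →
    ∃ δ', IsZeckRep (M + Nat.fib j) δ' ∧ ∀ k, k < j → δ' k = 0 := by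
  intro d
  induction d with
  | zero =>
    intro j M L δ h hL hd hj hlow
    have hnext : δ (j+1) = 0 := hL _ (by omega)
    refine ⟨Function.update δ j 1, set_bit h hj hlow hnext, fun k hk => ?_⟩
    rw [Function.update_of_ne (by omega)]
    exact hlow k (by omega)
  | succ d ih =>
    intro j M L δ h hL hd hj hlow
    by_cases hc : δ (j+1) = 1
    · -- carry: clear bit j+1, recurse at j+2
      have hjL : j + 1 ≤ L := by
        by_contra hc2; rw [hL (j+1) (by omega)] at hc; omega
      set δ₂ := Function.update δ (j+1) 0 with hδ₂
      have hrep₂ : IsZeckRep (M - Nat.fib (j+1)) δ₂ := clear_bit h hc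
      have hfM : Nat.fib (j+1) ≤ M := rep_mem_le h hc
      have hL₂ : ∀ k, L < k → δ₂ k = 0 := fun k hk => by
        rw [hδ₂, Function.update_of_ne (by omega)]; exact hL k hk
      have hlow₂ : ∀ k, k ≤ j + 2 → δ₂ k = 0 := by
        intro k hk
        rcases eq_or_ne k (j+1) with rfl | hne
        · simp [hδ₂]
        · rw [hδ₂, Function.update_of_ne hne]
          rcases Nat.lt_or_ge k (j+1) with h' | h'
          · exact hlow k (by omega)
          · have hk2 : k = j + 2 := by omega
            subst hk2
            by_contra hc3
            have : δ (j+2) = 1 := by have := h.1 (j+2); omega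
            have := h.2.2.1 (j+1) this
            omega
      obtain ⟨δ', hδ', hz'⟩ := ih (j+2) (M - Nat.fib (j+1)) L δ₂ hrep₂ hL₂
        (by omega) (by omega) hlow₂
      have hfib : Nat.fib (j+2) = Nat.fib j + Nat.fib (j+1) := Nat.fib_add_two
      have heq : M - Nat.fib (j+1) + Nat.fib (j+2) = M + Nat.fib j := by omega
      rw [heq] at hδ'
      exact ⟨δ', hδ', fun k hk => hz' k (by omega)⟩
    · have hnext : δ (j+1) = 0 := by have := h.1 (j+1); omega
      refine ⟨Function.update δ j 1, set_bit h hj hlow hnext, fun k hk => ?_⟩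
      rw [Function.update_of_ne (by omega)]
      exact hlow k (by omega)

lemma zeckDigit_eq {n : ℕ} {δ : ℕ → ℕ} (h : IsZeckRep n δ) (k : ℕ) :
    zeckDigit n k = δ k := by
  have hex : ∃ δ : ℕ → ℕ, IsZeckRep n δ := ⟨δ, h⟩
  rw [zeckDigit, dif_pos hex]
  exact congrFun (zeck_unique n _ _ hex.choose_spec h) k

/-- For every `ℓ ≥ 2` and every `n` there exists `0 ≤ y < F_ℓ` such that all Zeckendorf
digits of `n + y` with index `< ℓ` vanish, i.e. `v (n + y) ℓ = 0`. -/
theorem create_zeros (ℓ n : ℕ) (hℓ : 2 ≤ ℓ) :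
    ∃ y : ℕ, y < Nat.fib ℓ ∧
      ∑ k ∈ Finset.Ico 2 ℓ, zeckDigit (n + y) k * Nat.fib k = 0 := by
  obtain ⟨δ, hδ⟩ := zeck_exists n
  obtain ⟨h1, h2, h3, L, hL, hsum⟩ := id hδ
  set N := max (L+1) ℓ with hN
  have hℓN : ℓ ≤ N := le_max_right _ _
  have hnN : ∑ k ∈ Finset.range N, δ k * Nat.fib k = n := by
    rw [sum_ext δ hL (show L + 1 ≤ N from le_max_left _ _), ← hsum]
  set m := ∑ k ∈ Finset.range ℓ, δ k * Nat.fib k with hm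
  have hsplit : m + ∑ k ∈ Finset.Ico ℓ N, δ k * Nat.fib k = n := by
    rw [hm, ← hnN, Finset.range_eq_Ico, Finset.range_eq_Ico]
    exact Finset.sum_Ico_consecutive (f := fun k => δ k * Nat.fib k) (Nat.zero_le ℓ) hℓN
  have hmn : m ≤ n := by omega
  set δh : ℕ → ℕ := fun k => if k < ℓ then 0 else δ k with hδh
  have hδh_lt : ∀ k, k < ℓ → δh k = 0 := fun k hk => by simp [hδh, hk]
  have hδh_ge : ∀ k, ℓ ≤ k → δh k = δ k := fun k hk => by simp [hδh, Nat.not_lt.mpr hk]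
  have hsupph : ∀ k, max L ℓ < k → δh k = 0 := by
    intro k hk
    rw [hδh_ge k (by omega)]
    exact hL k (by omega)
  have hhi_sum : m + ∑ k ∈ Finset.range N, δh k * Nat.fib k = n := by
    have e1 : ∑ k ∈ Finset.range N, δh k * Nat.fib k
        = ∑ k ∈ Finset.Ico ℓ N, δ k * Nat.fib k := by
      rw [Finset.range_eq_Ico, ← Finset.sum_Ico_consecutive _ (Nat.zero_le ℓ) hℓN]
      have e2 : ∑ k ∈ Finset.Ico 0 ℓ, δh k * Nat.fib k = 0 :=
        Finset.sum_eq_zero fun x hx => by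
          rw [hδh_lt x (Finset.mem_Ico.mp hx).2]; ring
      have e3 : ∑ k ∈ Finset.Ico ℓ N, δh k * Nat.fib k
          = ∑ k ∈ Finset.Ico ℓ N, δ k * Nat.fib k :=
        Finset.sum_congr rfl fun x hx => by rw [hδh_ge x (Finset.mem_Ico.mp hx).1]
      rw [e2, e3, zero_add]
    rw [e1]; omega
  have hrep_h : IsZeckRep (n - m) δh := by
    refine ⟨fun k => ?_, fun k hk => hδh_lt k (by omega), fun k hk => ?_, max L ℓ,
      hsupph, ?_⟩
    · rcases Nat.lt_or_ge k ℓ with h' | h'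
      · rw [hδh_lt k h']; omega
      · rw [hδh_ge k h']; exact h1 k
    · rcases Nat.lt_or_ge (k+1) ℓ with h' | h'
      · rw [hδh_lt (k+1) h'] at hk; omega
      · rw [hδh_ge (k+1) h'] at hk
        rcases Nat.lt_or_ge k ℓ with h'' | h''
        · exact hδh_lt k h''
        · rw [hδh_ge k h'']; exact h3 k hk
    · have hNB : ∑ k ∈ Finset.range N, δh k * Nat.fib k
          = ∑ k ∈ Finset.range (max L ℓ + 1), δh k * Nat.fib k := by
        refine Finset.sum_subset (fun x hx => Finset.mem_range.mpr ?_) fun x hx hx2 => ?_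
        · simp only [Finset.mem_range] at hx; omega
        · simp only [Finset.mem_range] at hx hx2
          rw [hδh_ge x (by omega), hL x (by omega)]
          ring
      omega
  by_cases hm0 : m = 0
  · refine ⟨0, Nat.fib_pos.mpr (by omega), ?_⟩
    have e : ∑ k ∈ Finset.Ico 2 ℓ, zeckDigit (n+0) k * Nat.fib k
        = ∑ k ∈ Finset.Ico 2 ℓ, δ k * Nat.fib k :=
      Finset.sum_congr rfl fun x hx => by rw [show n + 0 = n from rfl, zeckDigit_eq hδ]
    have e2 : ∑ k ∈ Finset.Ico 2 ℓ, δ k * Nat.fib k = m := by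
      rw [hm, Finset.range_eq_Ico]
      refine Finset.sum_subset (Finset.Ico_subset_Ico (by omega) le_rfl) ?_
      intro x hx hx2
      simp only [Finset.mem_Ico] at hx hx2
      rw [h2 x (by omega)]; ring
    rw [e, e2, hm0]
  · have hmlt : m < Nat.fib ℓ := by
      have := zsum_lt δ h1 h2 h3 ℓ (by omega); omega
    by_cases hdl : δ ℓ = 1
    · -- carry case with top digit set at ℓ
      have hδh_l : δh ℓ = 1 := by rw [hδh_ge ℓ le_rfl]; exact hdl
      have hfl_le : Nat.fib ℓ ≤ n - m := rep_mem_le hrep_h hδh_l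
      have hd1 : δ (ℓ+1) = 0 := by
        by_contra hc
        have : δ (ℓ+1) = 1 := by have := h1 (ℓ+1); omega
        have := h3 ℓ this; omega
      have hdm1 : δ (ℓ-1) = 0 := by
        have := h3 (ℓ-1)
        rw [Nat.sub_add_cancel (by omega)] at this
        exact this hdl
      have hmsmall : m < Nat.fib (ℓ-1) := by
        have hms : m = ∑ k ∈ Finset.range (ℓ-1), δ k * Nat.fib k := by
          rw [hm, show ℓ = (ℓ-1) + 1 by omega, Finset.sum_range_succ,
            show ℓ - 1 + 1 - 1 = ℓ - 1 by omega, hdm1]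
          ring
        have := zsum_lt δ h1 h2 h3 (ℓ-1) (by omega)
        omega
      have hrep₂ : IsZeckRep (n - m - Nat.fib ℓ) (Function.update δh ℓ 0) :=
        clear_bit hrep_h hδh_l
      have hL₂ : ∀ k, max L ℓ < k → Function.update δh ℓ 0 k = 0 := by
        intro k hk
        rw [Function.update_of_ne (by omega)]
        exact hsupph k hk
      have hlow₂ : ∀ k, k ≤ ℓ+1 → Function.update δh ℓ 0 k = 0 := by
        intro k hk
        rcases eq_or_ne k ℓ with rfl | hne
        · simp
        · rw [Function.update_of_ne hne]
          rcases Nat.lt_or_ge k ℓ with h' | h'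
          · exact hδh_lt k h'
          · have : k = ℓ + 1 := by omega
            subst this
            rw [hδh_ge _ (by omega)]
            exact hd1
      obtain ⟨δ'', hδ'', hz⟩ := carry (max L ℓ + 2) (ℓ+1) (n - m - Nat.fib ℓ)
        (max L ℓ) _ hrep₂ hL₂ (by omega) (by omega) hlow₂
      have hfib : Nat.fib (ℓ+1) = Nat.fib (ℓ-1) + Nat.fib ℓ := by
        have hL1 : ℓ - 1 + 2 = ℓ + 1 := by omega
        have hL0 : ℓ - 1 + 1 = ℓ := by omega
        rw [← hL1, Nat.fib_add_two, hL0]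
      have heq : n - m - Nat.fib ℓ + Nat.fib (ℓ+1) = n + (Nat.fib (ℓ-1) - m) := by
        omega
      rw [heq] at hδ''
      refine ⟨Nat.fib (ℓ-1) - m, ?_, ?_⟩
      · have := Nat.fib_mono (show ℓ - 1 ≤ ℓ by omega)
        omega
      · refine Finset.sum_eq_zero fun x hx => ?_
        rw [zeckDigit_eq hδ'' x, hz x (by simp only [Finset.mem_Ico] at hx; omega)]
        ring
    · -- no digit at ℓ: just add fib ℓ
      have hδl0 : δ ℓ = 0 := by have := h1 ℓ; omega
      have hlow₂ : ∀ k, k ≤ ℓ → δh k = 0 := by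
        intro k hk
        rcases Nat.lt_or_ge k ℓ with h' | h'
        · exact hδh_lt k h'
        · have : k = ℓ := by omega
          subst this
          rw [hδh_ge _ le_rfl]; exact hδl0
      obtain ⟨δ'', hδ'', hz⟩ := carry (max L ℓ + 2) ℓ (n - m) (max L ℓ) δh hrep_h
        hsupph (by omega) hℓ hlow₂
      have heq : n - m + Nat.fib ℓ = n + (Nat.fib ℓ - m) := by omega
      rw [heq] at hδ''
      refine ⟨Nat.fib ℓ - m, by omega, ?_⟩
      refine Finset.sum_eq_zero fun x hx => ?_
      rw [zeckDigit_eq hδ'' x, hz x (by simp only [Finset.mem_Ico] at hx; omega)]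
      ring
end
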